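/- Let a group G act by automorphisms on a median graph 𝒢. Suppose there exist a hyperplane H of 𝒢 and elements g, h ∈ G such that the three hyperplanes H, g·H, h·H are pairwise disjoint and g·H separates H from h·H, i.e., there are two distinct connected components A and B of the graph obtained from 𝒢 by deleting the edges of g·H such that every endpoint of an edge of H lies in A and every endpoint of an edge of h·H lies in B. Then G contains an element k all of whose orbits are unbounded: for every vertex x and every N ∈ ℕ there exists n ∈ ℕ with dist(x, kⁿ·x) > N. -/

import Mathlib

/-- `m` is a median of `x`, `y`, `z` in the graph `G`. -/
def IsMedianOf {V : Type*} (G : SimpleGraph V) (m x y z : V) : Prop :=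
  G.dist x y = G.dist x m + G.dist m y ∧
  G.dist y z = G.dist y m + G.dist m z ∧
  G.dist x z = G.dist x m + G.dist m z

/-- A median graph: connected, and every triple of vertices has a unique median. -/
def MedianGraph {V : Type*} (G : SimpleGraph V) : Prop :=
  G.Connected ∧ ∀ x y z : V, ∃! m : V, IsMedianOf G m x y z

/-- Two edges are square-opposite: they are opposite sides of a 4-cycle. -/
def SquareOpposite {V : Type*} (G : SimpleGraph V) (e f : Sym2 V) : Prop :=
  ∃ a b c d : V, a ≠ b ∧ a ≠ c ∧ a ≠ d ∧ b ≠ c ∧ b ≠ d ∧ c ≠ d ∧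
    G.Adj a b ∧ G.Adj c d ∧ G.Adj a c ∧ G.Adj b d ∧ e = s(a, b) ∧ f = s(c, d)

/-- A hyperplane: an equivalence class of edges under the equivalence relation
generated by square-opposition. -/
def IsHyperplane {V : Type*} (G : SimpleGraph V) (H : Set (Sym2 V)) : Prop :=
  ∃ e ∈ G.edgeSet, H = {f | Relation.EqvGen (SquareOpposite G) e f}

/-- Two distinct hyperplanes are transverse if some 4-cycle contains an edge of each. -/
def Transverse {V : Type*} (G : SimpleGraph V) (H₁ H₂ : Set (Sym2 V)) : Prop :=
  H₁ ≠ H₂ ∧ ∃ a b c d : V, a ≠ b ∧ a ≠ c ∧ a ≠ d ∧ b ≠ c ∧ b ≠ d ∧ c ≠ d ∧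
    G.Adj a b ∧ G.Adj b c ∧ G.Adj c d ∧ G.Adj d a ∧
    (∃ e ∈ ({s(a, b), s(b, c), s(c, d), s(d, a)} : Set (Sym2 V)), e ∈ H₁) ∧
    (∃ e ∈ ({s(a, b), s(b, c), s(c, d), s(d, a)} : Set (Sym2 V)), e ∈ H₂)

/-- Two hyperplanes are disjoint if they are distinct and not transverse. -/
def DisjointHyp {V : Type*} (G : SimpleGraph V) (H₁ H₂ : Set (Sym2 V)) : Prop :=
  H₁ ≠ H₂ ∧ ¬ Transverse G H₁ H₂

/-- The image `g · H` of a set of edges `H` under the action of a group element `g`. -/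
def hypImage {V Γ : Type*} [SMul Γ V] (g : Γ) (H : Set (Sym2 V)) : Set (Sym2 V) :=
  Sym2.map (fun v => g • v) '' H

namespace Lox
variable {V : Type*} {G : SimpleGraph V}

lemma dist_adj (hG : MedianGraph G) {u v : V} (h : G.Adj u v) : G.dist u v = 1 :=
  SimpleGraph.dist_eq_one_iff_adj.mpr h

lemma dist_zero (hG : MedianGraph G) {u v : V} (h : G.dist u v = 0) : u = v :=
  (hG.1.dist_eq_zero_iff.mp h)

lemma lip (hG : MedianGraph G) {u v : V} (h : G.Adj u v) (w : V) :
    G.dist u w ≤ G.dist v w + 1 := by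
  have := hG.1.dist_triangle (u := u) (v := v) (w := w)
  have h1 : G.dist u v = 1 := dist_adj hG h
  omega

/-- Across an edge `a-b`, every vertex is strictly closer to one side. -/
lemma edge_dichotomy (hG : MedianGraph G) {a b : V} (hab : G.Adj a b) (v : V) :
    G.dist v b = G.dist v a + 1 ∨ G.dist v a = G.dist v b + 1 := by
  obtain ⟨m, hm, -⟩ := hG.2 v a b
  obtain ⟨h1, h2, h3⟩ := hm
  have hab1 : G.dist a b = 1 := dist_adj hG hab
  have h0 : G.dist a m = 0 ∨ G.dist m b = 0 := by omega
  rcases h0 with h0 | h0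
  · have hma : m = a := (dist_zero hG h0).symm
    rw [hma] at h1 h3
    have hsa : G.dist a a = 0 := SimpleGraph.dist_self
    left; omega
  · have hmb : m = b := dist_zero hG h0
    rw [hmb] at h1 h3
    have hba : G.dist b a = 1 := by rw [SimpleGraph.dist_comm]; exact hab1
    have hsb : G.dist b b = 0 := SimpleGraph.dist_self
    right; omega

lemma no_triangle (hG : MedianGraph G) {x y z : V} (hxy : G.Adj x y) (hyz : G.Adj y z)
    (hxz : G.Adj x z) : False := by
  obtain ⟨m, hm, -⟩ := hG.2 x y z
  obtain ⟨h1, h2, h3⟩ := hm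
  have d1 : G.dist x y = 1 := dist_adj hG hxy
  have d2 : G.dist y z = 1 := dist_adj hG hyz
  have d3 : G.dist x z = 1 := dist_adj hG hxz
  have hxm : G.dist x m = 0 ∨ G.dist m y = 0 := by omega
  rcases hxm with h | h
  · have hmx : m = x := (dist_zero hG h).symm
    rw [hmx] at h2
    have : G.dist y x = 1 := by rw [SimpleGraph.dist_comm]; exact d1
    omega
  · have hmy : m = y := dist_zero hG h
    rw [hmy] at h3
    omega

/-- Key square lemma, one half. -/
lemma square_half (hG : MedianGraph G) {a b u v u' v' : V}
    (hab : G.Adj a b)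
    (huv : G.Adj u v) (hu'v' : G.Adj u' v') (huu' : G.Adj u u') (hvv' : G.Adj v v')
    (huv' : u ≠ v') (hvu' : v ≠ u')
    (hu : G.dist u b = G.dist u a + 1) (hv : G.dist v a = G.dist v b + 1) :
    G.dist u' b = G.dist u' a + 1 := by
  set p := G.dist u a with hp
  have hva : G.dist v a ≤ p + 1 := lip hG (G.adj_symm huv) a
  have hub : G.dist u b ≤ G.dist v b + 1 := lip hG huv b
  have hvb : G.dist v b = p := by omega
  rcases edge_dichotomy hG hab u' with hgood | hbad
  · exact hgood
  exfalso
  have l1 : G.dist u' a ≤ p + 1 := lip hG (G.adj_symm huu') a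
  have l2 : G.dist u b ≤ G.dist u' b + 1 := lip hG huu' b
  have hu'b : G.dist u' b = p := by omega
  have hu'a : G.dist u' a = p + 1 := by omega
  have l3 : G.dist v' a ≤ G.dist v a + 1 := lip hG (G.adj_symm hvv') a
  have l4 : G.dist v a ≤ G.dist v' a + 1 := lip hG hvv' a
  have l5 : G.dist v' b ≤ G.dist v b + 1 := lip hG (G.adj_symm hvv') b
  -- adjacency distances in both orders
  have e1 : G.dist u' v' = 1 := dist_adj hG hu'v'
  have e2 : G.dist v' v = 1 := dist_adj hG (G.adj_symm hvv')
  have e3 : G.dist v v' = 1 := dist_adj hG hvv'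
  have e4 : G.dist u u' = 1 := dist_adj hG huu'
  have e5 : G.dist u' u = 1 := dist_adj hG (G.adj_symm huu')
  have e6 : G.dist u v = 1 := dist_adj hG huv
  have e7 : G.dist v u = 1 := dist_adj hG (G.adj_symm huv)
  have e8 : G.dist v' u' = 1 := dist_adj hG (G.adj_symm hu'v')
  have hnadj1 : ¬ G.Adj u v' := fun hadj => no_triangle hG huv hvv' hadj
  have duv' : G.dist u v' = 2 := by
    have hle : G.dist u v' ≤ 2 := by
      have := hG.1.dist_triangle (u := u) (v := v) (w := v')
      omega
    have hne0 : G.dist u v' ≠ 0 := fun h0 => huv' (dist_zero hG h0)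
    have hne1 : G.dist u v' ≠ 1 := fun h1 => hnadj1 (SimpleGraph.dist_eq_one_iff_adj.mp h1)
    omega
  have hnadj2 : ¬ G.Adj u' v := fun hadj => no_triangle hG huu' hadj huv
  have du'v : G.dist u' v = 2 := by
    have hle : G.dist u' v ≤ 2 := by
      have := hG.1.dist_triangle (u := u') (v := u) (w := v)
      omega
    have hne0 : G.dist u' v ≠ 0 := fun h0 => hvu' (dist_zero hG h0).symm
    have hne1 : G.dist u' v ≠ 1 := fun h1 => hnadj2 (SimpleGraph.dist_eq_one_iff_adj.mp h1)
    omega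
  have hrange : G.dist v' a = p ∨ G.dist v' a = p + 1 ∨ G.dist v' a = p + 2 := by omega
  rcases hrange with hc | hc | hc
  · -- v' and u both medians of (u', v, a) ⇒ u = v'
    have hmv' : IsMedianOf G v' u' v a := ⟨by omega, by omega, by omega⟩
    have hmu : IsMedianOf G u u' v a := ⟨by omega, by omega, by omega⟩
    obtain ⟨m, -, hu2⟩ := hG.2 u' v a
    exact huv' ((hu2 u hmu).trans (hu2 v' hmv').symm)
  · -- parity contradiction via median of (u, v', a)
    obtain ⟨m, hm, -⟩ := hG.2 u v' a
    obtain ⟨h1, h2, h3⟩ := hm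
    have : G.dist v' m = G.dist m v' := SimpleGraph.dist_comm
    omega
  · -- dist v' b = p+1, and u' and v both medians of (u, v', b)
    have hv'b : G.dist v' b = p + 1 := by
      rcases edge_dichotomy hG hab v' with hd | hd <;> omega
    have hmu' : IsMedianOf G u' u v' b := ⟨by omega, by omega, by omega⟩
    have hmv : IsMedianOf G v u v' b := ⟨by omega, by omega, by omega⟩
    obtain ⟨m, -, hu2⟩ := hG.2 u v' b
    exact hvu' ((hu2 v hmv).trans (hu2 u' hmu').symm)


lemma squareOpposite_symm {e f : Sym2 V} (h : SquareOpposite G e f) : SquareOpposite G f e := by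
  obtain ⟨a, b, c, d, h1, h2, h3, h4, h5, h6, hab, hcd, hac, hbd, he, hf⟩ := h
  exact ⟨c, d, a, b, h6, h2.symm, h4.symm, h3.symm, h5.symm, h1, hcd, hab, G.adj_symm hac, G.adj_symm hbd, hf, he⟩

/-- `e` crosses the edge `a-b`: its endpoints are strictly closer to `a` resp. `b`. -/
def Crosses (G : SimpleGraph V) (a b : V) (e : Sym2 V) : Prop :=
  ∃ x y : V, e = s(x, y) ∧ G.Adj x y ∧
    G.dist x b = G.dist x a + 1 ∧ G.dist y a = G.dist y b + 1

lemma crosses_of_squareOpposite (hG : MedianGraph G) {a b : V} (hab : G.Adj a b)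
    {e f : Sym2 V} (hsq : SquareOpposite G e f) (hc : Crosses G a b e) : Crosses G a b f := by
  obtain ⟨p, q, r, s, hpq, hpr, hps, hqr, hqs, hrs, hApq, hArs, hApr, hAqs, he, hf⟩ := hsq
  obtain ⟨x, y, hexy, hAxy, hx, hy⟩ := hc
  rw [he] at hexy
  rcases Sym2.eq_iff.mp hexy.symm with ⟨hxp, hyq⟩ | ⟨hxq, hyp⟩
  · subst hxp; subst hyq
    -- u = p=x closer to a, v = q=y closer to b; square (p,q,r,s)
    have h1 := square_half hG hab hApq hArs hApr hAqs hps hqr hx hy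
    have h2 := square_half hG (G.adj_symm hab) (G.adj_symm hApq) (G.adj_symm hArs) hAqs hApr hqr hps hy hx
    exact ⟨r, s, hf, hArs, h1, h2⟩
  · subst hxq; subst hyp
    -- x = q closer to a?? careful: x closer to a, x = q. So q side of a, p side of b.
    have h1 := square_half hG hab (G.adj_symm hApq) (G.adj_symm hArs) hAqs hApr hqr hps hx hy
    have h2 := square_half hG (G.adj_symm hab) hApq hArs hApr hAqs hps hqr hy hx
    exact ⟨s, r, hf.trans (Sym2.eq_swap), G.adj_symm hArs, h1, h2⟩

lemma crosses_of_eqvGen (hG : MedianGraph G) {a b : V} (hab : G.Adj a b)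
    {e f : Sym2 V} (h : Relation.EqvGen (SquareOpposite G) e f) :
    Crosses G a b e ↔ Crosses G a b f := by
  induction h with
  | rel x y hxy => exact ⟨fun hc => crosses_of_squareOpposite hG hab hxy hc,
      fun hc => crosses_of_squareOpposite hG hab (squareOpposite_symm hxy) hc⟩
  | refl x => exact Iff.rfl
  | symm x y _ ih => exact ih.symm
  | trans x y z _ _ ih1 ih2 => exact ih1.trans ih2

lemma crosses_base (hG : MedianGraph G) {a b : V} (hab : G.Adj a b) :
    Crosses G a b s(a, b) := by
  refine ⟨a, b, rfl, hab, ?_, ?_⟩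
  · rw [SimpleGraph.dist_self, dist_adj hG hab]
  · rw [SimpleGraph.dist_self, SimpleGraph.dist_comm, dist_adj hG hab]

/-- Every edge in the hyperplane class of `s(a,b)` crosses `a-b`. -/
lemma crosses_of_mem_class (hG : MedianGraph G) {a b : V} (hab : G.Adj a b)
    {e : Sym2 V} (h : Relation.EqvGen (SquareOpposite G) s(a, b) e) : Crosses G a b e :=
  (crosses_of_eqvGen hG hab h).mp (crosses_base hG hab)

/-- The side (component of the graph minus edge-set `X`) of basepoint `c`. -/
def Side (G : SimpleGraph V) (X : Set (Sym2 V)) (c : V) : Set V :=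
  {v | (G.deleteEdges X).Reachable v c}

lemma mem_side_self (G : SimpleGraph V) (X : Set (Sym2 V)) (c : V) : c ∈ Side G X c :=
  SimpleGraph.Reachable.refl c

lemma side_eq_of_mem {X : Set (Sym2 V)} {c d : V} (h : d ∈ Side G X c) :
    Side G X d = Side G X c := by
  ext v
  exact ⟨fun hv => hv.trans h, fun hv => hv.trans h.symm⟩

lemma side_boundary {X : Set (Sym2 V)} {c u v : V} (huv : G.Adj u v)
    (hv : v ∈ Side G X c) (hu : u ∉ Side G X c) : s(u, v) ∈ X := by
  by_contra hX
  exact hu (SimpleGraph.Adj.reachable (by rw [SimpleGraph.deleteEdges_adj]; exact ⟨huv, hX⟩) |>.trans hv)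

/-- Halfspace lemma: a vertex closer to `a` lies in the side of `a`. -/
lemma mem_side_of_closer (hG : MedianGraph G) {a b : V} (hab : G.Adj a b)
    {X : Set (Sym2 V)} (hX : X = {e | Relation.EqvGen (SquareOpposite G) s(a, b) e})
    (v : V) (hv : G.dist v b = G.dist v a + 1) : v ∈ Side G X a := by
  generalize hn : G.dist v a = n
  induction n using Nat.strong_induction_on generalizing v with
  | _ n ih =>
    rcases Nat.eq_zero_or_pos n with h0 | hpos
    · have : v = a := dist_zero hG (h0 ▸ hn)
      rw [this]; exact mem_side_self G X a
    · -- get a neighbor w with dist w a = n - 1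
      have hreach : G.Reachable v a := hG.1.preconnected v a
      obtain ⟨p, hp⟩ := hreach.exists_walk_length_eq_dist
      cases p with
      | nil => rw [SimpleGraph.Walk.length_nil] at hp; omega
      | cons hadj q =>
        rename_i w
        have hwlen : q.length = n - 1 := by
          rw [SimpleGraph.Walk.length_cons] at hp; omega
        have hwa : G.dist w a = n - 1 := by
          have hle : G.dist w a ≤ n - 1 := hwlen ▸ SimpleGraph.dist_le q
          have : G.dist v a ≤ G.dist w a + 1 := lip hG hadj a
          omega
        have hwb : G.dist w b = G.dist w a + 1 := by
          rcases edge_dichotomy hG hab w with h | h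
          · exact h
          · exfalso
            have : G.dist v b ≤ G.dist w b + 1 := lip hG hadj b
            omega
        have hwside : w ∈ Side G X a := ih (n - 1) (by omega) w hwb hwa
        have hedge : s(v, w) ∉ X := by
          intro hmem
          rw [hX] at hmem
          obtain ⟨x, y, hexy, -, hx, hy⟩ := crosses_of_mem_class hG hab hmem
          rcases Sym2.eq_iff.mp hexy.symm with ⟨hxv, hyw⟩ | ⟨hxw, hyv⟩
          · subst hxv; subst hyw; omega
          · subst hxw; subst hyv; omega
        exact (SimpleGraph.Adj.reachable
          (by rw [SimpleGraph.deleteEdges_adj]; exact ⟨hadj, hedge⟩)).trans hwside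

/-- Every vertex lies in one of the two sides of a hyperplane. -/
lemma side_dichotomy (hG : MedianGraph G) {a b : V} (hab : G.Adj a b)
    {X : Set (Sym2 V)} (hX : X = {e | Relation.EqvGen (SquareOpposite G) s(a, b) e})
    (v : V) : v ∈ Side G X a ∨ v ∈ Side G X b := by
  rcases edge_dichotomy hG hab v with h | h
  · exact Or.inl (mem_side_of_closer hG hab hX v h)
  · refine Or.inr (mem_side_of_closer hG (G.adj_symm hab) ?_ v h)
    rw [hX, Sym2.eq_swap]

end Lox

namespace Lox2
open Lox
variable {V : Type*} {G : SimpleGraph V} {Γ : Type*} [Group Γ] [MulAction Γ V]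

lemma sym2_map_map (γ δ : Γ) (e : Sym2 V) :
    Sym2.map (fun v => γ • v) (Sym2.map (fun v => δ • v) e) = Sym2.map (fun v => (γ * δ) • v) e := by
  rw [Sym2.map_map]
  congr 1
  funext v
  simp [Function.comp, mul_smul]

lemma sym2_map_one (e : Sym2 V) : Sym2.map (fun v => (1 : Γ) • v) e = e := by
  have : (fun v : V => (1 : Γ) • v) = id := by funext v; simp
  rw [this, Sym2.map_id]; rfl

lemma sym2_map_inv_map (γ : Γ) (e : Sym2 V) :
    Sym2.map (fun v => γ⁻¹ • v) (Sym2.map (fun v => γ • v) e) = e := by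
  rw [sym2_map_map, inv_mul_cancel, sym2_map_one]

lemma hypImage_comp (γ δ : Γ) (X : Set (Sym2 V)) :
    hypImage γ (hypImage δ X) = hypImage (γ * δ) X := by
  unfold hypImage
  rw [← Set.image_comp]
  have : (Sym2.map fun v : V => γ • v) ∘ (Sym2.map fun v => δ • v)
      = Sym2.map fun v => (γ * δ) • v := funext (sym2_map_map γ δ)
  rw [this]

lemma mem_hypImage_iff (γ : Γ) (X : Set (Sym2 V)) (e : Sym2 V) :
    e ∈ hypImage γ X ↔ Sym2.map (fun v => γ⁻¹ • v) e ∈ X := by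
  constructor
  · rintro ⟨f, hf, rfl⟩
    rwa [sym2_map_inv_map]
  · intro h
    exact ⟨_, h, by rw [sym2_map_map, mul_inv_cancel, sym2_map_one]⟩

lemma hypImage_inj (γ : Γ) {X Y : Set (Sym2 V)} (h : hypImage γ X = hypImage γ Y) : X = Y := by
  have := congrArg (hypImage γ⁻¹) h
  rwa [hypImage_comp, hypImage_comp, inv_mul_cancel, show hypImage (1:Γ) X = X from ?_,
    show hypImage (1:Γ) Y = Y from ?_] at this
  · unfold hypImage
    ext e; constructor
    · rintro ⟨f, hf, rfl⟩; rwa [sym2_map_one]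
    · intro h; exact ⟨e, h, sym2_map_one e⟩
  · unfold hypImage
    ext e; constructor
    · rintro ⟨f, hf, rfl⟩; rwa [sym2_map_one]
    · intro h; exact ⟨e, h, sym2_map_one e⟩

section act
variable (hact : ∀ (g : Γ) (u v : V), G.Adj u v ↔ G.Adj (g • u) (g • v))
include hact

lemma so_map (γ : Γ) {e f : Sym2 V} (h : SquareOpposite G e f) :
    SquareOpposite G (Sym2.map (fun v => γ • v) e) (Sym2.map (fun v => γ • v) f) := by
  obtain ⟨a, b, c, d, h1, h2, h3, h4, h5, h6, hab, hcd, hac, hbd, he, hf⟩ := h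
  have inj : Function.Injective (fun v : V => γ • v) := fun x y hxy => by
    simpa using congrArg (fun v => γ⁻¹ • v) hxy
  refine ⟨γ • a, γ • b, γ • c, γ • d, fun hx => h1 (inj hx), fun hx => h2 (inj hx),
    fun hx => h3 (inj hx), fun hx => h4 (inj hx), fun hx => h5 (inj hx), fun hx => h6 (inj hx),
    (hact γ a b).mp hab, (hact γ c d).mp hcd, (hact γ a c).mp hac, (hact γ b d).mp hbd, ?_, ?_⟩
  · rw [he, Sym2.map_pair_eq]
  · rw [hf, Sym2.map_pair_eq]

lemma eqvGen_map (γ : Γ) {e f : Sym2 V} (h : Relation.EqvGen (SquareOpposite G) e f) :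
    Relation.EqvGen (SquareOpposite G) (Sym2.map (fun v => γ • v) e)
      (Sym2.map (fun v => γ • v) f) := by
  induction h with
  | rel x y hxy => exact Relation.EqvGen.rel _ _ (so_map hact γ hxy)
  | refl x => exact Relation.EqvGen.refl _
  | symm x y _ ih => exact ih.symm _ _
  | trans x y z _ _ ih1 ih2 => exact ih1.trans _ _ _ ih2

lemma hypImage_class (γ : Γ) (e₀ : Sym2 V) :
    hypImage γ {e | Relation.EqvGen (SquareOpposite G) e₀ e} =
      {e | Relation.EqvGen (SquareOpposite G) (Sym2.map (fun v => γ • v) e₀) e} := by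
  ext f
  constructor
  · rintro ⟨e, he, rfl⟩
    exact eqvGen_map hact γ he
  · intro hf
    rw [mem_hypImage_iff]
    have := eqvGen_map hact γ⁻¹ (hf : Relation.EqvGen _ _ f)
    rwa [sym2_map_inv_map] at this

lemma del_adj_map (γ : Γ) {X : Set (Sym2 V)} {u w : V} (h : (G.deleteEdges X).Adj u w) :
    (G.deleteEdges (hypImage γ X)).Adj (γ • u) (γ • w) := by
  rw [SimpleGraph.deleteEdges_adj] at h ⊢
  refine ⟨(hact γ u w).mp h.1, fun hmem => h.2 ?_⟩
  rw [mem_hypImage_iff, Sym2.map_pair_eq] at hmem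
  simpa [inv_smul_smul] using hmem

lemma side_map (γ : Γ) (X : Set (Sym2 V)) (c : V) {v : V} (h : v ∈ Side G X c) :
    γ • v ∈ Side G (hypImage γ X) (γ • c) := by
  rw [Side, Set.mem_setOf_eq, SimpleGraph.reachable_iff_reflTransGen] at h ⊢
  induction h with
  | refl => exact Relation.ReflTransGen.refl
  | tail _ hadj ih => exact ih.tail (del_adj_map hact γ hadj)

lemma side_map_iff (γ : Γ) (X : Set (Sym2 V)) (c v : V) :
    γ • v ∈ Side G (hypImage γ X) (γ • c) ↔ v ∈ Side G X c := by
  refine ⟨fun h => ?_, side_map hact γ X c⟩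
  have := side_map hact γ⁻¹ (hypImage γ X) (γ • c) h
  rwa [hypImage_comp, inv_mul_cancel, inv_smul_smul, inv_smul_smul,
    show hypImage (1:Γ) X = X from ?_] at this
  ext e
  constructor
  · rintro ⟨f, hf, rfl⟩; rwa [sym2_map_one]
  · intro h'; exact ⟨e, h', sym2_map_one e⟩

end act
end Lox2

namespace Lox2
open Lox
variable {V : Type*} {G : SimpleGraph V} {Γ : Type*} [Group Γ] [MulAction Γ V]

def SLev (k : Γ) (P : Set V) (i : ℤ) : Set V := {v | k ^ (-i) • v ∈ P}

lemma mem_SLev {k : Γ} {P : Set V} {i : ℤ} {v : V} : v ∈ SLev k P i ↔ k ^ (-i) • v ∈ P :=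
  Iff.rfl

section engine
variable {k : Γ} {P : Set V} {W' : Set (Sym2 V)}

lemma SLev_step (hinv : ∀ x ∈ P, k • x ∈ P) (i : ℤ) : SLev k P (i + 1) ⊆ SLev k P i := by
  intro v hv
  rw [mem_SLev] at hv ⊢
  have h1 : (k : Γ) * k ^ (-(i + 1)) = k ^ (-i) := by
    rw [← zpow_one_add]; congr 1; ring
  rw [← h1, ← smul_smul]
  exact hinv _ hv

lemma SLev_anti (hinv : ∀ x ∈ P, k • x ∈ P) (i : ℤ) (n : ℕ) : SLev k P (i + n) ⊆ SLev k P i := by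
  induction n with
  | zero => simp
  | succ m ih =>
    refine subset_trans ?_ ih
    have : (i + ((m + 1 : ℕ) : ℤ)) = (i + m) + 1 := by push_cast; ring
    rw [this]
    exact SLev_step hinv (i + m)

lemma SLev_nocross (hact : ∀ (g : Γ) (u v : V), G.Adj u v ↔ G.Adj (g • u) (g • v))
    (hbd : ∀ u v : V, G.Adj u v → v ∈ P → u ∉ P → s(u, v) ∈ W')
    (hinv : ∀ x ∈ P, k • x ∈ P)
    (hdisj : ∀ e ∈ W', e ∉ hypImage k W') (i : ℤ) (u v : V) (huv : G.Adj u v) (hu : u ∉ SLev k P i)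
    (hv : v ∈ SLev k P (i + 1)) : False := by
  have hv0 : k ^ (-i) • v ∈ P := mem_SLev.mp (SLev_step hinv i hv)
  have hu0 : k ^ (-i) • u ∉ P := fun h => hu (mem_SLev.mpr h)
  have hadj0 : G.Adj (k ^ (-i) • u) (k ^ (-i) • v) := (hact _ u v).mp huv
  have hW0 : s(k ^ (-i) • u, k ^ (-i) • v) ∈ W' := hbd _ _ hadj0 hv0 hu0
  have hu1 : k ^ (-(i + 1)) • u ∉ P := fun h => hu (SLev_step hinv i (mem_SLev.mpr h))
  have hv1 : k ^ (-(i + 1)) • v ∈ P := mem_SLev.mp hv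
  have hadj1 : G.Adj (k ^ (-(i + 1)) • u) (k ^ (-(i + 1)) • v) := (hact _ u v).mp huv
  have hW1 : s(k ^ (-(i + 1)) • u, k ^ (-(i + 1)) • v) ∈ W' := hbd _ _ hadj1 hv1 hu1
  refine hdisj _ hW0 ?_
  refine ⟨_, hW1, ?_⟩
  have h1 : (k : Γ) * k ^ (-(i + 1)) = k ^ (-i) := by
    rw [← zpow_one_add]; congr 1; ring
  rw [Sym2.map_pair_eq, smul_smul, smul_smul, h1]

lemma SLev_key (hact : ∀ (g : Γ) (u v : V), G.Adj u v ↔ G.Adj (g • u) (g • v))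
    (hbd : ∀ u v : V, G.Adj u v → v ∈ P → u ∉ P → s(u, v) ∈ W')
    (hinv : ∀ x ∈ P, k • x ∈ P)
    (hdisj : ∀ e ∈ W', e ∉ hypImage k W') {x y : V} (w : G.Walk x y) (i : ℤ) (n : ℕ)
    (hx : x ∉ SLev k P i) (hy : y ∈ SLev k P (i + n)) : n ≤ w.length := by
  induction w generalizing i n with
  | nil =>
    rcases Nat.eq_zero_or_pos n with h0 | hpos
    · omega
    · exfalso; exact hx (SLev_anti hinv i n hy)
  | cons hadj w' ih =>
    rename_i u₀ v₀ w₀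
    by_cases hx' : v₀ ∈ SLev k P (i + 1)
    · exact absurd (SLev_nocross hact hbd hinv hdisj i _ _ hadj hx hx') id
    · rcases Nat.eq_zero_or_pos n with h0 | hpos
      · omega
      · obtain ⟨m, rfl⟩ : ∃ m, n = m + 1 := ⟨n - 1, by omega⟩
        have hy' : w₀ ∈ SLev k P ((i + 1) + m) := by
          have : (i + 1) + (m : ℤ) = i + ((m + 1 : ℕ) : ℤ) := by push_cast; ring
          rw [this]
          exact hy
        have := ih (i + 1) m hx' hy'
        rw [SimpleGraph.Walk.length_cons]
        omega

lemma engine (hact : ∀ (g : Γ) (u v : V), G.Adj u v ↔ G.Adj (g • u) (g • v))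
    (hbd : ∀ u v : V, G.Adj u v → v ∈ P → u ∉ P → s(u, v) ∈ W')
    (hinv : ∀ x ∈ P, k • x ∈ P)
    (hdisj : ∀ e ∈ W', e ∉ hypImage k W') (hconn : G.Connected)
    (x₁ : V) (hx₁ : x₁ ∈ P) (x₂ : V) (hx₂ : x₂ ∉ P) :
    ∀ x : V, ∀ N : ℕ, ∃ n : ℕ, N < G.dist x (k ^ n • x) := by
  intro x N
  -- x lies in some level
  have hex1 : ∃ i : ℤ, x ∈ SLev k P i := by
    by_contra hcon
    push_neg at hcon
    obtain ⟨w₁⟩ := hconn x x₁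
    have h0 : x₁ ∈ SLev k P ((-(w₁.length + 1 : ℕ) : ℤ) + ((w₁.length + 1 : ℕ) : ℤ)) := by
      rw [mem_SLev]
      have : ((-(w₁.length + 1 : ℕ) : ℤ) + ((w₁.length + 1 : ℕ) : ℤ)) = 0 := by push_cast; ring
      rw [this]
      simpa using hx₁
    have := SLev_key hact hbd hinv hdisj w₁ (-(w₁.length + 1 : ℕ) : ℤ) (w₁.length + 1)
      (hcon _) h0
    omega
  -- x is outside some level
  have hex2 : ∃ j : ℤ, x ∉ SLev k P j := by
    by_contra hcon
    push_neg at hcon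
    obtain ⟨w₂⟩ := hconn x₂ x
    have h0 : x₂ ∉ SLev k P 0 := by
      rw [mem_SLev]
      simpa using hx₂
    have := SLev_key hact hbd hinv hdisj w₂ 0 (w₂.length + 1) h0
      (by simpa using hcon ((w₂.length + 1 : ℕ) : ℤ))
    omega
  obtain ⟨i₀, hi₀⟩ := hex1
  obtain ⟨j₀, hj₀⟩ := hex2
  -- maximal level containing x
  have hmax : ∃ i : ℤ, x ∈ SLev k P i ∧ x ∉ SLev k P (i + 1) := by
    by_contra hcon
    push_neg at hcon
    have mono : ∀ n : ℕ, x ∈ SLev k P (i₀ + n) := by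
      intro n
      induction n with
      | zero => simpa using hi₀
      | succ m ih =>
        have h1 := hcon _ ih
        have : i₀ + ((m + 1 : ℕ) : ℤ) = (i₀ + m) + 1 := by push_cast; ring
        rw [this]
        exact h1
    have hlt : i₀ < j₀ := by
      by_contra hle
      push_neg at hle
      have : x ∈ SLev k P (j₀ + ((i₀ - j₀).toNat : ℕ)) := by
        have : (j₀ + ((i₀ - j₀).toNat : ℤ)) = i₀ := by omega
        rw [this]; exact hi₀
      exact hj₀ (SLev_anti hinv j₀ _ this)
    have : x ∈ SLev k P (i₀ + ((j₀ - i₀).toNat : ℕ)) := mono _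
    rw [show (i₀ + (((j₀ - i₀).toNat : ℕ) : ℤ)) = j₀ by omega] at this
    exact hj₀ this
  obtain ⟨i, hin, hout⟩ := hmax
  refine ⟨N + 2, ?_⟩
  set y := k ^ (N + 2) • x with hy
  have hymem : y ∈ SLev k P (i + ((N + 2 : ℕ) : ℤ)) := by
    rw [mem_SLev, hy, smul_smul]
    have harith : k ^ (-(i + ((N + 2 : ℕ) : ℤ))) * k ^ (N + 2) = k ^ (-i) := by
      rw [← zpow_natCast k (N + 2), ← zpow_add]
      congr 1
      push_cast
      ring
    rw [harith]
    exact hin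
  obtain ⟨w, hw⟩ := hconn.exists_walk_length_eq_dist x y
  have hkey := SLev_key hact hbd hinv hdisj w (i + 1) (N + 1) hout
    (by rw [show ((i + 1) + ((N + 1 : ℕ) : ℤ)) = i + ((N + 2 : ℕ) : ℤ) by push_cast; ring]; exact hymem)
  omega

end engine
end Lox2

namespace Lox2
open Lox
variable {V : Type*} {G : SimpleGraph V} {Γ : Type*} [Group Γ] [MulAction Γ V]

lemma hypImage_one (X : Set (Sym2 V)) : hypImage (1 : Γ) X = X := by
  ext e
  constructor
  · rintro ⟨f, hf, rfl⟩; rwa [sym2_map_one]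
  · intro h'; exact ⟨e, h', sym2_map_one e⟩

lemma class_eq_of_common {R : Sym2 V → Sym2 V → Prop} {e₁ e₂ e : Sym2 V}
    (h1 : Relation.EqvGen R e₁ e) (h2 : Relation.EqvGen R e₂ e) :
    {f | Relation.EqvGen R e₁ f} = {f | Relation.EqvGen R e₂ f} := by
  ext f
  constructor
  · intro hf
    exact (h2.trans _ _ _ ((h1.symm _ _).trans _ _ _ hf))
  · intro hf
    exact (h1.trans _ _ _ ((h2.symm _ _).trans _ _ _ hf))

lemma class_disjoint {R : Sym2 V → Sym2 V → Prop} {e₁ e₂ : Sym2 V}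
    (hne : {f | Relation.EqvGen R e₁ f} ≠ {f | Relation.EqvGen R e₂ f}) :
    ∀ e ∈ {f | Relation.EqvGen R e₁ f}, e ∉ {f | Relation.EqvGen R e₂ f} :=
  fun _ h1 h2 => hne (class_eq_of_common h1 h2)

/-- Transfer connectivity from one deleted-edge graph to another. -/
lemma side_transfer {X Y : Set (Sym2 V)} {c : V}
    (hedge : ∀ u v : V, G.Adj u v → u ∈ Side G X c → v ∈ Side G X c → s(u, v) ∉ Y) :
    Side G X c ⊆ Side G Y c := by
  intro v hv
  have hv' := hv
  rw [Side, Set.mem_setOf_eq, SimpleGraph.reachable_iff_reflTransGen] at hv ⊢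
  induction hv using Relation.ReflTransGen.head_induction_on with
  | refl => exact Relation.ReflTransGen.refl
  | head hr hrt ih =>
    rename_i p q
    have hq : q ∈ Side G X c := (G.deleteEdges X).reachable_iff_reflTransGen q c |>.mpr hrt
    have hp : p ∈ Side G X c := (SimpleGraph.Adj.reachable hr).trans hq
    have hGadj : G.Adj p q := (SimpleGraph.deleteEdges_adj.mp hr).1
    exact Relation.ReflTransGen.head
      (SimpleGraph.deleteEdges_adj.mpr ⟨hGadj, hedge p q hGadj hp hq⟩) (ih hq)

/-- The core construction. -/
lemma core (hG : MedianGraph G)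
    (hact : ∀ (g : Γ) (u v : V), G.Adj u v ↔ G.Adj (g • u) (g • v))
    (a₀ b₀ : V) (hab₀ : G.Adj a₀ b₀) (g h : Γ)
    (hne1 : {f | Relation.EqvGen (SquareOpposite G) s(a₀, b₀) f} ≠
      hypImage g {f | Relation.EqvGen (SquareOpposite G) s(a₀, b₀) f})
    (hne2 : {f | Relation.EqvGen (SquareOpposite G) s(a₀, b₀) f} ≠
      hypImage h {f | Relation.EqvGen (SquareOpposite G) s(a₀, b₀) f})
    (hne3 : hypImage g {f | Relation.EqvGen (SquareOpposite G) s(a₀, b₀) f} ≠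
      hypImage h {f | Relation.EqvGen (SquareOpposite G) s(a₀, b₀) f})
    (hnr : ¬ (G.deleteEdges (hypImage g {f | Relation.EqvGen (SquareOpposite G) s(a₀, b₀) f})).Reachable
      (g • a₀) (g • b₀))
    (hA : ∀ v : V, (∃ e ∈ {f | Relation.EqvGen (SquareOpposite G) s(a₀, b₀) f}, v ∈ e) →
      v ∈ Side G (hypImage g {f | Relation.EqvGen (SquareOpposite G) s(a₀, b₀) f}) (g • a₀))
    (hB : ∀ v : V, (∃ e ∈ hypImage h {f | Relation.EqvGen (SquareOpposite G) s(a₀, b₀) f}, v ∈ e) →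
      v ∈ Side G (hypImage g {f | Relation.EqvGen (SquareOpposite G) s(a₀, b₀) f}) (g • b₀)) :
    ∃ k : Γ, ∀ x : V, ∀ N : ℕ, ∃ n : ℕ, N < G.dist x (k ^ n • x) := by
  set Hc : Set (Sym2 V) := {f | Relation.EqvGen (SquareOpposite G) s(a₀, b₀) f} with hHc
  set Wc : Set (Sym2 V) := hypImage g Hc with hWc
  set Uc : Set (Sym2 V) := hypImage h Hc with hUc
  set a : V := g • a₀ with ha
  set b : V := g • b₀ with hb
  have hWc_class : Wc = {f | Relation.EqvGen (SquareOpposite G) s(a, b) f} := by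
    rw [hWc, hHc, hypImage_class hact, Sym2.map_pair_eq]
  have hUc_class : Uc = {f | Relation.EqvGen (SquareOpposite G) s(h • a₀, h • b₀) f} := by
    rw [hUc, hHc, hypImage_class hact, Sym2.map_pair_eq]
  have hadj_ab : G.Adj a b := (hact g a₀ b₀).mp hab₀
  set Ahat : Set V := Side G Wc a with hAhat
  set Bhat : Set V := Side G Wc b with hBhat
  have hdisjAB : ∀ v : V, v ∈ Ahat → v ∈ Bhat → False := by
    intro v h1 h2
    exact hnr ((h1 : (G.deleteEdges Wc).Reachable v a).symm.trans h2)
  have hT : ∀ v : V, v ∈ Ahat ∨ v ∈ Bhat := fun v => side_dichotomy hG hadj_ab hWc_class v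
  set Ehat : Set V := Side G Hc b with hEhat
  set Dhat : Set V := Side G Uc a with hDhat
  have hF1 : Bhat ⊆ Ehat := by
    refine side_transfer (fun u v huv hu hv hmem => ?_)
    exact hdisjAB u (hA u ⟨s(u, v), hmem, Sym2.mem_mk_left u v⟩) hu
  have hF2 : Ahat ⊆ Dhat := by
    refine side_transfer (fun u v huv hu hv hmem => ?_)
    exact hdisjAB u hu (hB u ⟨s(u, v), hmem, Sym2.mem_mk_left u v⟩)
  set k : Γ := h * g⁻¹ with hk
  have hkW : hypImage k Wc = Uc := by
    rw [hWc, hypImage_comp, hUc, show (k * g : Γ) = h by rw [hk]; group]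
  have hkinvU : hypImage k⁻¹ Uc = Wc := by
    rw [← hkW, hypImage_comp]
    rw [show (k⁻¹ * k : Γ) = 1 by group, hypImage_one]
  have ha_mem : a ∈ Ahat := mem_side_self G Wc a
  have hb_mem : b ∈ Bhat := mem_side_self G Wc b
  have ha_nB : a ∉ Bhat := fun hmem => hnr hmem
  have hb_nA : b ∉ Ahat := fun hmem => hnr ((hmem : (G.deleteEdges Wc).Reachable b a).symm)
  rcases hT (g • b) with hgb | hgb
  ·
    rcases hT (k⁻¹ • a) with hka | hka
    · -- C2 : k' = k⁻¹, P = Ahat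
      refine ⟨k⁻¹, engine hact (fun u v huv hv hu => side_boundary huv hv hu)
        (fun x hx => ?_) ?_ hG.1 a ha_mem b hb_nA⟩
      · -- invariance
        have hxD : x ∈ Dhat := hF2 hx
        have := side_map hact k⁻¹ Uc a hxD
        rw [hkinvU] at this
        rw [← side_eq_of_mem hka]
        exact this
      · -- disjointness  Wc ∩ k⁻¹ Wc = ∅
        have hWkW : Wc ≠ hypImage k⁻¹ Wc := by
          intro heq
          have h2 : hypImage k (hypImage k⁻¹ Wc) = Wc := by
            rw [hypImage_comp, show (k * k⁻¹ : Γ) = 1 by group, hypImage_one]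
          have h3 : Uc = Wc := by
            rw [← hkW]
            conv_lhs => rw [heq]
            exact h2
          exact hne3 h3.symm
        have hclass2 : hypImage k⁻¹ Wc =
            {f | Relation.EqvGen (SquareOpposite G) s(k⁻¹ • a, k⁻¹ • b) f} := by
          rw [hWc_class, hypImage_class hact, Sym2.map_pair_eq]
        intro e he
        rw [hclass2]
        refine class_disjoint ?_ e (by rw [← hWc_class]; exact he)
        rw [← hWc_class, ← hclass2]
        exact hWkW
    · -- C3 : k' = h, P = Ehat
      have hgbA : Side G Wc (g • b) = Ahat := side_eq_of_mem hgb
      have hkaB : Side G Wc (k⁻¹ • a) = Bhat := side_eq_of_mem hka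
      have claim1 : ∀ y : V, y ∈ Side G Uc (h • b) → y ∈ Dhat → False := by
        intro y h1 h2
        have e1 := side_map hact k⁻¹ Uc (h • b) h1
        have e2 := side_map hact k⁻¹ Uc a h2
        rw [hkinvU] at e1 e2
        rw [show k⁻¹ • (h • b) = g • b by rw [smul_smul]; congr 1; rw [hk]; group] at e1
        rw [hgbA] at e1
        rw [hkaB] at e2
        exact hdisjAB _ e1 e2
      refine ⟨h, engine hact (fun u v huv hv hu => side_boundary huv hv hu)
        (fun x hx => ?_) ?_ hG.1 b (hF1 hb_mem) (h⁻¹ • a) ?_⟩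
      · -- invariance : h x ∈ Ehat
        have h1 : h • x ∈ Side G Uc (h • b) := by
          have := side_map hact h Hc b hx
          rwa [← hUc] at this
        have h2 : h • x ∉ Dhat := fun hD => claim1 _ h1 hD
        rcases hT (h • x) with hc | hc
        · exact absurd (hF2 hc) h2
        · exact hF1 hc
      · -- disjointness Hc ∩ h Hc = ∅
        have hclass2 : hypImage h Hc =
            {f | Relation.EqvGen (SquareOpposite G) s(h • a₀, h • b₀) f} := by
          rw [hHc, hypImage_class hact, Sym2.map_pair_eq]
        intro e he
        rw [hclass2]
        refine class_disjoint ?_ e (by rw [hHc] at he; exact he)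
        rw [← hHc, ← hclass2]
        exact hne2
      · -- h⁻¹ a ∉ Ehat
        intro hmem
        have h1 : h • (h⁻¹ • a) ∈ Side G Uc (h • b) := by
          have := side_map hact h Hc b hmem
          rwa [← hUc] at this
        rw [smul_inv_smul] at h1
        exact claim1 a h1 (mem_side_self G Uc a)
  · -- Case C1 : k' = g, P = Bhat
    refine ⟨g, engine hact (fun u v huv hv hu => side_boundary huv hv hu)
      (fun x hx => ?_) ?_ hG.1 b hb_mem a ha_nB⟩
    · -- invariance : g x ∈ Bhat
      have hxE : x ∈ Ehat := hF1 hx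
      have := side_map hact g Hc b hxE
      rw [← hWc] at this
      rw [← side_eq_of_mem hgb]
      exact this
    · -- disjointness Wc ∩ g Wc = ∅
      have hWgW : Wc ≠ hypImage g Wc := by
        intro heq
        rw [hWc] at heq
        exact hne1 (hypImage_inj g heq)
      have hclass2 : hypImage g Wc =
          {f | Relation.EqvGen (SquareOpposite G) s(g • a, g • b) f} := by
        rw [hWc_class, hypImage_class hact, Sym2.map_pair_eq]
      intro e he
      rw [hclass2]
      refine class_disjoint ?_ e (by rw [← hWc_class]; exact he)
      rw [← hWc_class, ← hclass2]
      exact hWgW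

end Lox2

/-- If a group acts on a median graph and some hyperplane `H` together with two of
its translates `g·H`, `h·H` are pairwise disjoint, with `g·H` separating `H` from
`h·H`, then the group contains an element all of whose orbits are unbounded. -/
theorem exists_loxodromic_of_three_separated_translates {V : Type*}
    (𝒢 : SimpleGraph V) (hG : MedianGraph 𝒢)
    {Γ : Type*} [Group Γ] [MulAction Γ V]
    (hact : ∀ (g : Γ) (u v : V), 𝒢.Adj u v ↔ 𝒢.Adj (g • u) (g • v))
    (H : Set (Sym2 V)) (hH : IsHyperplane 𝒢 H) (g h : Γ)
    (hd1 : DisjointHyp 𝒢 H (hypImage g H))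
    (hd2 : DisjointHyp 𝒢 H (hypImage h H))
    (hd3 : DisjointHyp 𝒢 (hypImage g H) (hypImage h H))
    (hsep : ∃ A B : (𝒢.deleteEdges (hypImage g H)).ConnectedComponent, A ≠ B ∧
      (∀ v : V, (∃ e ∈ H, v ∈ e) → v ∈ A.supp) ∧
      (∀ v : V, (∃ e ∈ hypImage h H, v ∈ e) → v ∈ B.supp)) :
    ∃ k : Γ, ∀ x : V, ∀ N : ℕ, ∃ n : ℕ, N < 𝒢.dist x (k ^ n • x) := by
  classical
  obtain ⟨e₀, he₀, rfl⟩ := hH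
  induction e₀ using Sym2.ind with
  | _ a₀ b₀ =>
  have hab₀ : 𝒢.Adj a₀ b₀ := 𝒢.mem_edgeSet.mp he₀
  set Hc : Set (Sym2 V) := {f | Relation.EqvGen (SquareOpposite 𝒢) s(a₀, b₀) f} with hHc
  set Wc : Set (Sym2 V) := hypImage g Hc with hWc
  have hWc_class : Wc = {f | Relation.EqvGen (SquareOpposite 𝒢) s(g • a₀, g • b₀) f} := by
    rw [hWc, hHc, Lox2.hypImage_class hact, Sym2.map_pair_eq]
  have hadj : 𝒢.Adj (g • a₀) (g • b₀) := (hact g a₀ b₀).mp hab₀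
  obtain ⟨A, B, hAB, hA, hB⟩ := hsep
  obtain ⟨vA, hvA0⟩ := A.exists_rep
  obtain ⟨vB, hvB0⟩ := B.exists_rep
  have hvA : (𝒢.deleteEdges Wc).connectedComponentMk vA = A := hvA0
  have hvB : (𝒢.deleteEdges Wc).connectedComponentMk vB = B := hvB0
  have hsA : A.supp = Lox.Side 𝒢 Wc vA := by
    ext v
    rw [SimpleGraph.ConnectedComponent.mem_supp_iff, ← hvA, SimpleGraph.ConnectedComponent.eq]
    rfl
  have hsB : B.supp = Lox.Side 𝒢 Wc vB := by
    ext v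
    rw [SimpleGraph.ConnectedComponent.mem_supp_iff, ← hvB, SimpleGraph.ConnectedComponent.eq]
    rfl
  have hsupp_ne : A.supp ≠ B.supp := by
    intro hEq
    refine hAB ?_
    have : vA ∈ A.supp := by
      rw [SimpleGraph.ConnectedComponent.mem_supp_iff, hvA]
    rw [hEq, SimpleGraph.ConnectedComponent.mem_supp_iff] at this
    rw [← hvA, this]
  have hdichA := Lox.side_dichotomy hG hadj hWc_class vA
  have hdichB := Lox.side_dichotomy hG hadj hWc_class vB
  have hnr : ¬ (𝒢.deleteEdges Wc).Reachable (g • a₀) (g • b₀) := by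
    intro hr
    have h1 : Lox.Side 𝒢 Wc (g • a₀) = Lox.Side 𝒢 Wc (g • b₀) := Lox.side_eq_of_mem hr
    rcases hdichA with h2 | h2 <;> rcases hdichB with h3 | h3 <;>
      exact hsupp_ne (by
        rw [hsA, hsB, Lox.side_eq_of_mem h2, Lox.side_eq_of_mem h3]
        try rw [h1]
        try rw [← h1])
  rcases hdichA with h2 | h2 <;> rcases hdichB with h3 | h3
  · -- both in side a : contradiction
    exact absurd (by rw [hsA, hsB, Lox.side_eq_of_mem h2, Lox.side_eq_of_mem h3]) hsupp_ne
  · -- A-side = a, B-side = b : direct case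
    have hsA' : A.supp = Lox.Side 𝒢 Wc (g • a₀) := by rw [hsA, Lox.side_eq_of_mem h2]
    have hsB' : B.supp = Lox.Side 𝒢 Wc (g • b₀) := by rw [hsB, Lox.side_eq_of_mem h3]
    exact Lox2.core hG hact a₀ b₀ hab₀ g h hd1.1 hd2.1 hd3.1 hnr
      (fun v hv => by rw [← hsA']; exact hA v hv)
      (fun v hv => by rw [← hsB']; exact hB v hv)
  · -- A-side = b, B-side = a : swapped case
    have hsA' : A.supp = Lox.Side 𝒢 Wc (g • b₀) := by rw [hsA, Lox.side_eq_of_mem h2]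
    have hsB' : B.supp = Lox.Side 𝒢 Wc (g • a₀) := by rw [hsB, Lox.side_eq_of_mem h3]
    have hswap : s(b₀, a₀) = s(a₀, b₀) := Sym2.eq_swap
    refine Lox2.core hG hact b₀ a₀ hab₀.symm g h ?_ ?_ ?_ ?_ ?_ ?_
    · rw [hswap]; exact hd1.1
    · rw [hswap]; exact hd2.1
    · rw [hswap]; exact hd3.1
    · rw [hswap]; exact fun hr => hnr hr.symm
    · rw [hswap]; exact fun v hv => by rw [← hsA']; exact hA v hv
    · rw [hswap]; exact fun v hv => by rw [← hsB']; exact hB v hv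
  · -- both in side b : contradiction
    exact absurd (by rw [hsA, hsB, Lox.side_eq_of_mem h2, Lox.side_eq_of_mem h3]) hsupp_ne
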